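/- Let k > 0 and let R : [a,b] → ℝ be a C² function satisfying R''(x) ≥ k·R(x) for all x, R'(x) ≥ 0 for all x, and R(a) = R₀ > 0. Then R(x) ≥ (R₀/2)(e^{√k(x−a)} + e^{−√k(x−a)}) for all x ∈ [a,b]. -/

import Mathlib

open Set

theorem stmt_6 (a b k R₀ : ℝ) (hk : 0 < k) (hR₀ : 0 < R₀)
    (R R' R'' : ℝ → ℝ)
    (hR' : ∀ x ∈ Icc a b, HasDerivWithinAt R (R' x) (Icc a b) x)
    (hR'' : ∀ x ∈ Icc a b, HasDerivWithinAt R' (R'' x) (Icc a b) x)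
    (hR''cont : ContinuousOn R'' (Icc a b))
    (hineq : ∀ x ∈ Icc a b, k * R x ≤ R'' x)
    (hmono : ∀ x ∈ Icc a b, 0 ≤ R' x)
    (hRa : R a = R₀) :
    ∀ x ∈ Icc a b,
      R₀ / 2 * (Real.exp (Real.sqrt k * (x - a)) + Real.exp (-(Real.sqrt k * (x - a)))) ≤ R x := by
  intro x hx
  have hab : a ≤ b := le_trans hx.1 hx.2
  have ha : a ∈ Icc a b := ⟨le_refl a, hab⟩
  set s := Real.sqrt k with hs
  have hspos : 0 < s := Real.sqrt_pos.mpr hk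
  have hs2 : s * s = k := Real.mul_self_sqrt hk.le
  set C : ℝ → ℝ := fun y => R₀ / 2 * (Real.exp (s * (y - a)) + Real.exp (-(s * (y - a)))) with hC
  set C' : ℝ → ℝ := fun y => R₀ / 2 * (s * Real.exp (s * (y - a)) - s * Real.exp (-(s * (y - a)))) with hC'
  have hCpos : ∀ y, 0 < C y := fun y => by
    have := Real.exp_pos (s * (y - a))
    have := Real.exp_pos (-(s * (y - a)))
    simp only [hC]
    positivity
  have hlin : ∀ y : ℝ, HasDerivAt (fun y => s * (y - a)) s y := by
    intro y
    simpa using ((hasDerivAt_id y).sub_const a).const_mul s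
  have hCd : ∀ y, HasDerivAt C (C' y) y := by
    intro y
    have h2 : HasDerivAt (fun y => Real.exp (s * (y - a)))
        (Real.exp (s * (y - a)) * s) y := (hlin y).exp
    have h3 : HasDerivAt (fun y => Real.exp (-(s * (y - a))))
        (Real.exp (-(s * (y - a))) * (-s)) y := (hlin y).neg.exp
    have := (h2.add h3).const_mul (R₀ / 2)
    refine this.congr_deriv ?_
    simp only [hC']
    ring
  have hC'd : ∀ y, HasDerivAt C' (k * C y) y := by
    intro y
    have h2 : HasDerivAt (fun y => Real.exp (s * (y - a)))
        (Real.exp (s * (y - a)) * s) y := (hlin y).exp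
    have h3 : HasDerivAt (fun y => Real.exp (-(s * (y - a))))
        (Real.exp (-(s * (y - a))) * (-s)) y := (hlin y).neg.exp
    have := ((h2.const_mul s).sub (h3.const_mul s)).const_mul (R₀ / 2)
    refine this.congr_deriv ?_
    rw [← hs2]
    simp only [hC]
    ring
  set W : ℝ → ℝ := fun y => R' y * C y - R y * C' y with hW
  have hWd : ∀ y ∈ Icc a b, HasDerivWithinAt W ((R'' y - k * R y) * C y) (Icc a b) y := by
    intro y hy
    have := ((hR'' y hy).mul (hCd y).hasDerivWithinAt).sub
      ((hR' y hy).mul (hC'd y).hasDerivWithinAt)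
    refine this.congr_deriv ?_
    ring
  have hWcont : ContinuousOn W (Icc a b) := fun y hy => (hWd y hy).continuousWithinAt
  have hWmono : MonotoneOn W (Icc a b) := by
    apply monotoneOn_of_deriv_nonneg (convex_Icc a b) hWcont
    · intro y hy
      rw [interior_Icc] at hy
      exact (((hWd y (Ioo_subset_Icc_self hy)).hasDerivAt
        (Icc_mem_nhds hy.1 hy.2)).differentiableAt).differentiableWithinAt
    · intro y hy
      rw [interior_Icc] at hy
      rw [((hWd y (Ioo_subset_Icc_self hy)).hasDerivAt (Icc_mem_nhds hy.1 hy.2)).deriv]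
      have h1 := hineq y (Ioo_subset_Icc_self hy)
      have h2 := (hCpos y).le
      nlinarith
  have hWa : 0 ≤ W a := by
    have h1 : C' a = 0 := by simp [hC']
    have h2 := (hCpos a).le
    have h3 := hmono a ha
    simp only [hW, h1, mul_zero, sub_zero]
    exact mul_nonneg h3 h2
  have hW0 : ∀ y ∈ Icc a b, 0 ≤ W y := fun y hy =>
    le_trans hWa (hWmono ha hy hy.1)
  set Q : ℝ → ℝ := fun y => R y / C y with hQ
  have hQd : ∀ y ∈ Icc a b,
      HasDerivWithinAt Q ((R' y * C y - R y * C' y) / (C y) ^ 2) (Icc a b) y := by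
    intro y hy
    exact (hR' y hy).div (hCd y).hasDerivWithinAt (hCpos y).ne'
  have hQcont : ContinuousOn Q (Icc a b) := fun y hy => (hQd y hy).continuousWithinAt
  have hQmono : MonotoneOn Q (Icc a b) := by
    apply monotoneOn_of_deriv_nonneg (convex_Icc a b) hQcont
    · intro y hy
      rw [interior_Icc] at hy
      exact (((hQd y (Ioo_subset_Icc_self hy)).hasDerivAt
        (Icc_mem_nhds hy.1 hy.2)).differentiableAt).differentiableWithinAt
    · intro y hy
      rw [interior_Icc] at hy
      rw [((hQd y (Ioo_subset_Icc_self hy)).hasDerivAt (Icc_mem_nhds hy.1 hy.2)).deriv]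
      exact div_nonneg (hW0 y (Ioo_subset_Icc_self hy)) (sq_nonneg _)
  have hCa : C a = R₀ := by simp [hC]; ring
  have hQa : Q a = 1 := by
    simp only [hQ, hRa, hCa]
    exact div_self hR₀.ne'
  have h1 : (1 : ℝ) ≤ Q x := hQa ▸ hQmono ha hx hx.1
  have := (one_le_div (hCpos x)).mp h1
  simpa [hC] using this
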